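/- Let M₁, M₂, M₃ ∈ SL(2, ℂ) with M₁M₂M₃ = I. Then det([M_j, M_k]) = 4T for any pair j ≠ k in {1, 2, 3}, where t_i = (1/2)tr(M_i) and T = 1 − t₁² − t₂² − t₃² + 2t₁t₂t₃. -/
import Mathlib


open Matrix

lemma det_comm_key (A B : Matrix (Fin 2) (Fin 2) ℂ) (hA : A.det = 1) (hB : B.det = 1) :
    (A * B - B * A).det =
      4 - A.trace ^ 2 - B.trace ^ 2 - (A * B).trace ^ 2
        + A.trace * B.trace * (A * B).trace := by
  rw [Matrix.det_fin_two] at hA hB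
  simp only [Matrix.det_fin_two, Matrix.trace_fin_two, Matrix.mul_apply, Matrix.sub_apply,
    Fin.sum_univ_two]
  linear_combination (2 - (B 0 0)^2 - 2*(B 0 1)*(B 1 0) - (B 1 1)^2) * hA +
    (2 - (A 0 0)^2 - 2*(A 0 1)*(A 1 0) - (A 1 1)^2) * hB

lemma trace_right_inv (X Y : Matrix (Fin 2) (Fin 2) ℂ) (hXY : X * Y = 1) (hX : X.det = 1) :
    Y.trace = X.trace := by
  have hY : Y = X.adjugate := by
    have h1 : X.adjugate * (X * Y) = X.adjugate := by rw [hXY, mul_one]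
    rwa [← mul_assoc, Matrix.adjugate_mul, hX, one_smul, one_mul] at h1
  rw [hY, Matrix.adjugate_fin_two]
  simp [Matrix.trace_fin_two, add_comm]

/-- For a triple in SL(2,ℂ) with product the identity,
det [M_j, M_k] = 4T where T is the trace polynomial. -/
theorem det_commutator_eq_four_T
    (M : Fin 3 → Matrix (Fin 2) (Fin 2) ℂ) (hdet : ∀ k, (M k).det = 1)
    (hprod : M 0 * M 1 * M 2 = 1) :
    ∀ j k : Fin 3, j ≠ k →
      (M j * M k - M k * M j).det =
        4 * (1 - ((1:ℂ)/2 * (M 0).trace)^2 - ((1:ℂ)/2 * (M 1).trace)^2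
          - ((1:ℂ)/2 * (M 2).trace)^2
          + 2 * ((1:ℂ)/2 * (M 0).trace) * ((1:ℂ)/2 * (M 1).trace)
            * ((1:ℂ)/2 * (M 2).trace)) := by
  have hdet01 : (M 0 * M 1).det = 1 := by
    rw [Matrix.det_mul, hdet 0, hdet 1, one_mul]
  have t01 : (M 0 * M 1).trace = (M 2).trace := by
    rw [trace_right_inv (M 0 * M 1) (M 2) hprod hdet01]
  have hprod' : M 0 * (M 1 * M 2) = 1 := by rw [← mul_assoc]; exact hprod
  have t12 : (M 1 * M 2).trace = (M 0).trace :=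
    trace_right_inv (M 0) (M 1 * M 2) hprod' (hdet 0)
  have hprod'' : M 1 * (M 2 * M 0) = 1 := by
    have := mul_eq_one_comm.mp hprod'
    rw [mul_assoc] at this
    exact this
  have t20 : (M 2 * M 0).trace = (M 1).trace :=
    trace_right_inv (M 1) (M 2 * M 0) hprod'' (hdet 1)
  have t10 : (M 1 * M 0).trace = (M 2).trace := by rw [Matrix.trace_mul_comm, t01]
  have t21 : (M 2 * M 1).trace = (M 0).trace := by rw [Matrix.trace_mul_comm, t12]
  have t02 : (M 0 * M 2).trace = (M 1).trace := by rw [Matrix.trace_mul_comm, t20]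
  intro j k hjk
  fin_cases j <;> fin_cases k <;>
    simp only [Fin.mk_zero, Fin.mk_one, show (⟨2, by omega⟩ : Fin 3) = 2 from rfl] at hjk ⊢ <;>
    first
      | exact absurd rfl hjk
      | (rw [det_comm_key _ _ (hdet _) (hdet _)]
         first
           | rw [t01] | rw [t10] | rw [t12] | rw [t21] | rw [t02] | rw [t20]
         ring)
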